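/- For all a, b, c > 0 one has (cosh c + cosh a · cosh b)/(sinh a · sinh b) > 1, so that G(a,b,c) = arcosh( (cosh c + cosh a·cosh b)/(sinh a·sinh b) ) is well defined and positive; moreover for every L̄ > 0 there exists a constant C such that for all a, b, c ∈ (0, L̄/2] the partial derivative of G with respect to c satisfies 0 < ∂G/∂c (a,b,c) = sinh c / ( sinh a · sinh b · sinh(G(a,b,c)) ) ≤ C · sinh c. -/

import Mathlib

open Real

/-- Inverse hyperbolic cosine: `arcosh x = log(x + √(x² − 1))`. -/
noncomputable def arcosh (x : ℝ) : ℝ := Real.log (x + Real.sqrt (x ^ 2 - 1))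

/-- Length `G(a,b,c)` of the side opposite the side of length `c` in a right-angled geodesic
hexagon in the hyperbolic plane with alternating side lengths `a`, `b`, `c`. -/
noncomputable def hexG (a b c : ℝ) : ℝ :=
  _root_.arcosh ((Real.cosh c + Real.cosh a * Real.cosh b) / (Real.sinh a * Real.sinh b))

lemma arcosh_pos {x : ℝ} (hx : 1 < x) : 0 < _root_.arcosh x := by
  have h1 : (1:ℝ) < x + Real.sqrt (x ^ 2 - 1) :=
    lt_of_lt_of_le hx (le_add_of_nonneg_right (Real.sqrt_nonneg _))
  exact Real.log_pos h1

lemma sinh_arcosh {x : ℝ} (hx : 1 < x) :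
    Real.sinh (_root_.arcosh x) = Real.sqrt (x ^ 2 - 1) := by
  have hs : Real.sqrt (x ^ 2 - 1) ^ 2 = x ^ 2 - 1 := by
    rw [sq]; exact Real.mul_self_sqrt (by nlinarith)
  have hy : (0:ℝ) < x + Real.sqrt (x ^ 2 - 1) := by
    have := Real.sqrt_nonneg (x ^ 2 - 1); linarith
  have hinv : (x + Real.sqrt (x ^ 2 - 1))⁻¹ = x - Real.sqrt (x ^ 2 - 1) := by
    rw [inv_eq_iff_eq_inv, eq_comm, inv_eq_iff_eq_inv]
    refine eq_inv_of_mul_eq_one_left ?_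
    nlinarith [hs]
  rw [_root_.arcosh, Real.sinh_log hy, hinv]; ring

lemma hasDerivAt_arcosh {x : ℝ} (hx : 1 < x) :
    HasDerivAt _root_.arcosh (1 / Real.sqrt (x ^ 2 - 1)) x := by
  have h0 : (0:ℝ) < x ^ 2 - 1 := by nlinarith
  have hsp : 0 < Real.sqrt (x ^ 2 - 1) := Real.sqrt_pos.2 h0
  have hs : Real.sqrt (x ^ 2 - 1) ^ 2 = x ^ 2 - 1 := by
    rw [sq]; exact Real.mul_self_sqrt h0.le
  have hy : (0:ℝ) < x + Real.sqrt (x ^ 2 - 1) := by linarith [hsp, hx]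
  have hinner : HasDerivAt (fun t : ℝ => t ^ 2 - 1) (2 * x) x := by
    simpa using ((hasDerivAt_pow 2 x).sub_const 1)
  have hsqrt : HasDerivAt (fun t : ℝ => Real.sqrt (t ^ 2 - 1))
      (2 * x / (2 * Real.sqrt (x ^ 2 - 1))) x := hinner.sqrt h0.ne'
  have hsum : HasDerivAt (fun t : ℝ => t + Real.sqrt (t ^ 2 - 1))
      (1 + 2 * x / (2 * Real.sqrt (x ^ 2 - 1))) x := (hasDerivAt_id x).add hsqrt
  have hlog := hsum.log hy.ne'
  refine hlog.congr_deriv ?_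
  field_simp
  nlinarith [hs, hsp]

theorem hexagon_side_derivative :
    (∀ a b c : ℝ, 0 < a → 0 < b → 0 < c →
      1 < (Real.cosh c + Real.cosh a * Real.cosh b) / (Real.sinh a * Real.sinh b) ∧
      0 < hexG a b c) ∧
    ∀ Lbar : ℝ, 0 < Lbar → ∃ C : ℝ, ∀ a b c : ℝ,
      a ∈ Set.Ioc 0 (Lbar / 2) → b ∈ Set.Ioc 0 (Lbar / 2) → c ∈ Set.Ioc 0 (Lbar / 2) →
        HasDerivAt (fun c' => hexG a b c')
            (Real.sinh c / (Real.sinh a * Real.sinh b * Real.sinh (hexG a b c))) c ∧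
        0 < Real.sinh c / (Real.sinh a * Real.sinh b * Real.sinh (hexG a b c)) ∧
        Real.sinh c / (Real.sinh a * Real.sinh b * Real.sinh (hexG a b c)) ≤
          C * Real.sinh c := by
  have key : ∀ a b c : ℝ, 0 < a → 0 < b → 0 < c →
      Real.sinh a * Real.sinh b + 2 ≤ Real.cosh c + Real.cosh a * Real.cosh b := by
    intro a b c ha hb hc
    have h1 : Real.cosh a * Real.cosh b - Real.sinh a * Real.sinh b = Real.cosh (a - b) := by
      rw [Real.cosh_sub]
    have h2 : (1:ℝ) ≤ Real.cosh (a - b) := Real.one_le_cosh _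
    have h3 : (1:ℝ) ≤ Real.cosh c := Real.one_le_cosh _
    linarith
  have ratio : ∀ a b c : ℝ, 0 < a → 0 < b → 0 < c →
      1 < (Real.cosh c + Real.cosh a * Real.cosh b) / (Real.sinh a * Real.sinh b) := by
    intro a b c ha hb hc
    have hD : 0 < Real.sinh a * Real.sinh b :=
      mul_pos (Real.sinh_pos_iff.2 ha) (Real.sinh_pos_iff.2 hb)
    rw [one_lt_div hD]
    linarith [key a b c ha hb hc]
  constructor
  · intro a b c ha hb hc
    exact ⟨ratio a b c ha hb hc, _root_.arcosh_pos (ratio a b c ha hb hc)⟩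
  · intro Lbar _
    refine ⟨1/2, ?_⟩
    intro a b c ha hb hc
    obtain ⟨ha0, -⟩ := ha
    obtain ⟨hb0, -⟩ := hb
    obtain ⟨hc0, -⟩ := hc
    set D := Real.sinh a * Real.sinh b with hDdef
    have hD : 0 < D := mul_pos (Real.sinh_pos_iff.2 ha0) (Real.sinh_pos_iff.2 hb0)
    set N := Real.cosh c + Real.cosh a * Real.cosh b with hNdef
    have hx : 1 < N / D := ratio a b c ha0 hb0 hc0
    have hG : Real.sinh (hexG a b c) = Real.sqrt ((N / D) ^ 2 - 1) := _root_.sinh_arcosh hx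
    have h0 : (0:ℝ) < (N / D) ^ 2 - 1 := by nlinarith
    have hsp : 0 < Real.sqrt ((N / D) ^ 2 - 1) := Real.sqrt_pos.2 h0
    have hsq : Real.sqrt ((N / D) ^ 2 - 1) ^ 2 = (N / D) ^ 2 - 1 := by
      rw [sq]; exact Real.mul_self_sqrt h0.le
    -- the key lower bound: D * sinh G ≥ 2
    have hN2 : D + 2 ≤ N := key a b c ha0 hb0 hc0
    have hbig : 2 ≤ D * Real.sinh (hexG a b c) := by
      rw [hG]
      have hDsq : D * Real.sqrt ((N / D) ^ 2 - 1) = Real.sqrt (N ^ 2 - D ^ 2) := by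
        rw [← Real.sqrt_sq hD.le, ← Real.sqrt_mul (sq_nonneg D)]
        congr 1
        field_simp
        rw [Real.sq_sqrt (sq_nonneg D)]
      rw [hDsq]
      have : (4:ℝ) ≤ N ^ 2 - D ^ 2 := by nlinarith
      calc (2:ℝ) = Real.sqrt 4 := by
              rw [show (4:ℝ) = 2 ^ 2 by norm_num, Real.sqrt_sq (by norm_num)]
        _ ≤ Real.sqrt (N ^ 2 - D ^ 2) := Real.sqrt_le_sqrt this
    have hGpos : 0 < Real.sinh (hexG a b c) := by rw [hG]; exact hsp
    have hDG : 0 < D * Real.sinh (hexG a b c) := mul_pos hD hGpos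
    refine ⟨?_, ?_, ?_⟩
    · -- the derivative
      have hf : HasDerivAt (fun c' : ℝ => (Real.cosh c' + Real.cosh a * Real.cosh b) / D)
          (Real.sinh c / D) c := by
        exact ((Real.hasDerivAt_cosh c).add_const _).div_const D
      have harc := (_root_.hasDerivAt_arcosh hx).comp c hf
      have heq : (fun c' : ℝ => hexG a b c') =
          _root_.arcosh ∘ fun c' : ℝ => (Real.cosh c' + Real.cosh a * Real.cosh b) / D := by
        funext c'; rfl
      rw [heq]
      refine harc.congr_deriv ?_
      rw [hG, div_mul_div_comm, one_mul, mul_comm D]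
    · exact div_pos (Real.sinh_pos_iff.2 hc0) hDG
    · have := div_le_div_of_nonneg_left (Real.sinh_pos_iff.2 hc0).le (by norm_num : (0:ℝ) < 2) hbig
      calc Real.sinh c / (D * Real.sinh (hexG a b c)) ≤ Real.sinh c / 2 := this
        _ = 1 / 2 * Real.sinh c := by ring
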